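/- Let M be the 8×8 matrix with nonzero entries M₁₂ = -1, M₂₁ = ε², M₂₂ = 2ε, M₅₅ = 2k, M₇₇ = ε, M₈₁ = ε(k-1), M₈₂ = k-1, M₈₈ = ε, where ε > 0 and k > 3 are real constants. Then there exists a constant C such that for all σ ∈ (0,1), the operator norm of σ^M = exp((log σ)·M) is at most C. -/

import Mathlib

open scoped Matrix

attribute [local instance] Matrix.linftyOpNormedRing Matrix.linftyOpNormedAlgebra

/-- The 8×8 matrix arising as the principal part of the Fuchsian system
for half-polarized T² symmetric spacetimes: nonzero entries
M₁₂ = -1, M₂₁ = ε², M₂₂ = 2ε, M₅₅ = 2k, M₇₇ = ε, M₈₁ = ε(k-1), M₈₂ = k-1, M₈₈ = ε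
(1-based indexing). -/
noncomputable def fuchsianMatrix (ε k : ℝ) : Matrix (Fin 8) (Fin 8) ℝ :=
  fun i j =>
    if i = 0 ∧ j = 1 then -1
    else if i = 1 ∧ j = 0 then ε ^ 2
    else if i = 1 ∧ j = 1 then 2 * ε
    else if i = 4 ∧ j = 4 then 2 * k
    else if i = 6 ∧ j = 6 then ε
    else if i = 7 ∧ j = 0 then ε * (k - 1)
    else if i = 7 ∧ j = 1 then k - 1
    else if i = 7 ∧ j = 7 then ε
    else 0

/-- Diagonal part (with ε filled in on the nilpotent block). -/
noncomputable def fuchsD (ε k : ℝ) : Fin 8 → ℝ := fun i =>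
  if i = 2 ∨ i = 3 ∨ i = 5 then 0 else if i = 4 then 2 * k else ε

/-- Nilpotent part. -/
noncomputable def fuchsN (ε k : ℝ) : Matrix (Fin 8) (Fin 8) ℝ :=
  fuchsianMatrix ε k - Matrix.diagonal (fuchsD ε k)

set_option maxHeartbeats 2000000 in
lemma fuchsN_sq (ε k : ℝ) : fuchsN ε k * fuchsN ε k = 0 := by
  ext i j
  rw [Matrix.mul_apply, Fin.sum_univ_eight]
  fin_cases i <;> fin_cases j <;>
    simp [fuchsN, fuchsianMatrix, fuchsD, Matrix.diagonal] <;> ring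

set_option maxHeartbeats 1000000 in
lemma fuchs_commute (ε k : ℝ) : Commute (Matrix.diagonal (fuchsD ε k)) (fuchsN ε k) := by
  show _ * _ = _ * _
  ext i j
  rw [Matrix.diagonal_mul, Matrix.mul_diagonal]
  fin_cases i <;> fin_cases j <;>
    simp [fuchsN, fuchsianMatrix, fuchsD, Matrix.diagonal] <;> ring

set_option maxHeartbeats 1000000 in
lemma fuchs_diag_mul_N (ε k : ℝ) (w : Fin 8 → ℝ) (hw : w 0 = w 1) (hw7 : w 7 = w 1) :
    Matrix.diagonal w * fuchsN ε k = w 1 • fuchsN ε k := by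
  ext i j
  rw [Matrix.diagonal_mul, Matrix.smul_apply]
  fin_cases i <;> fin_cases j <;>
    simp [fuchsN, fuchsianMatrix, fuchsD, Matrix.diagonal, hw, hw7] <;> ring

lemma exp_of_sq_zero {𝔸 : Type*} [NormedRing 𝔸] [NormedAlgebra ℝ 𝔸] [CompleteSpace 𝔸]
    {A : 𝔸} (h : A * A = 0) : NormedSpace.exp A = 1 + A := by
  rw [NormedSpace.exp_eq_tsum ℝ]
  beta_reduce
  rw [tsum_eq_sum (s := ({0, 1} : Finset ℕ)) ?_]
  · simp
  · intro n hn
    simp only [Finset.mem_insert, Finset.mem_singleton] at hn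
    have h2 : 2 ≤ n := by omega
    have : A ^ n = 0 := by
      calc A ^ n = A ^ 2 * A ^ (n - 2) := by rw [← pow_add]; congr 1; omega
      _ = 0 := by rw [sq, h, zero_mul]
    simp [this]

lemma t_exp_bound {t ε : ℝ} (ht : t ≤ 0) (hε : 0 < ε) :
    |t| * Real.exp (t * ε) ≤ 1 / ε := by
  have h1 : -(t * ε) + 1 ≤ Real.exp (-(t * ε)) := Real.add_one_le_exp _
  have h2 : Real.exp (-(t * ε)) * Real.exp (t * ε) = 1 := by
    rw [← Real.exp_add]; simp
  have h3 : 0 < Real.exp (t * ε) := Real.exp_pos _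
  rw [abs_of_nonpos ht]
  rw [div_eq_inv_mul, ← mul_le_mul_iff_right₀ hε]
  have : ε * (-t * Real.exp (t * ε)) = (-(t * ε)) * Real.exp (t * ε) := by ring
  rw [this]
  calc (-(t * ε)) * Real.exp (t * ε) ≤ Real.exp (-(t * ε)) * Real.exp (t * ε) := by
        nlinarith
    _ = 1 := h2
    _ = ε * (ε⁻¹ * 1) := by field_simp
    _ ≤ ε * (ε⁻¹ * 1) := le_refl _

/-- For the Fuchsian matrix M with ε > 0 and k > 3, the operator norm of
σ^M = exp((log σ)·M) is uniformly bounded for σ ∈ (0,1). -/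
theorem sigma_pow_M_bounded (ε k : ℝ) (hε : 0 < ε) (hk : 3 < k) :
    ∃ C : ℝ, ∀ σ : ℝ, σ ∈ Set.Ioo (0 : ℝ) 1 →
      ‖NormedSpace.exp (Real.log σ • fuchsianMatrix ε k)‖ ≤ C := by
  refine ⟨1 + (1 / ε) * ‖fuchsN ε k‖, ?_⟩
  rintro σ ⟨hσ0, hσ1⟩
  set t := Real.log σ with htdef
  have ht : t ≤ 0 := Real.log_nonpos hσ0.le hσ1.le
  -- decompose
  have hM : Real.log σ • fuchsianMatrix ε k
      = t • Matrix.diagonal (fuchsD ε k) + t • fuchsN ε k := by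
    rw [← smul_add]
    congr 1
    simp [fuchsN]
  have hcomm : Commute (t • Matrix.diagonal (fuchsD ε k)) (t • fuchsN ε k) :=
    ((fuchs_commute ε k).smul_left t).smul_right t
  have hnil : (t • fuchsN ε k) * (t • fuchsN ε k) = 0 := by
    rw [smul_mul_assoc, mul_smul_comm, fuchsN_sq]; simp
  -- the exponential of each piece
  set w : Fin 8 → ℝ := fun i => Real.exp (t * fuchsD ε k i) with hwdef
  have hexpD : NormedSpace.exp (t • Matrix.diagonal (fuchsD ε k))
      = Matrix.diagonal w := by
    rw [← Matrix.diagonal_smul, Matrix.exp_diagonal, Pi.exp_def]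
    congr 1
    funext i
    rw [← Real.exp_eq_exp_ℝ]
    simp [hwdef, smul_eq_mul]
  have hexpN : NormedSpace.exp (t • fuchsN ε k) = 1 + t • fuchsN ε k :=
    exp_of_sq_zero hnil
  have key : NormedSpace.exp (Real.log σ • fuchsianMatrix ε k)
      = Matrix.diagonal w + t • (w 1 • fuchsN ε k) := by
    rw [hM, show NormedSpace.exp (t • Matrix.diagonal (fuchsD ε k) + t • fuchsN ε k) = NormedSpace.exp (t • Matrix.diagonal (fuchsD ε k)) * NormedSpace.exp (t • fuchsN ε k) from NormedSpace.exp_add_of_commute hcomm, hexpD, hexpN]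
    rw [mul_add, mul_one, Matrix.mul_smul, fuchs_diag_mul_N]
    · simp [hwdef, fuchsD]
    · simp [hwdef, fuchsD]
  rw [key]
  have hw1 : w 1 = Real.exp (t * ε) := by simp [hwdef, fuchsD]
  have hDnorm : ‖Matrix.diagonal w‖ ≤ 1 := by
    rw [Matrix.linfty_opNorm_diagonal]
    rw [pi_norm_le_iff_of_nonneg zero_le_one]
    intro i
    rw [Real.norm_eq_abs, abs_of_pos (Real.exp_pos _), Real.exp_le_one_iff]
    have hD : 0 ≤ fuchsD ε k i := by
      fin_cases i <;> simp [fuchsD] <;> positivity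
    exact mul_nonpos_of_nonpos_of_nonneg ht hD
  have hNnorm : ‖t • (w 1 • fuchsN ε k)‖ ≤ (1 / ε) * ‖fuchsN ε k‖ := by
    rw [norm_smul, norm_smul, Real.norm_eq_abs, Real.norm_eq_abs, hw1,
      abs_of_pos (Real.exp_pos _), ← mul_assoc]
    exact mul_le_mul_of_nonneg_right (t_exp_bound ht hε) (norm_nonneg _)
  calc ‖Matrix.diagonal w + t • (w 1 • fuchsN ε k)‖
      ≤ ‖Matrix.diagonal w‖ + ‖t • (w 1 • fuchsN ε k)‖ := norm_add_le _ _
    _ ≤ 1 + (1 / ε) * ‖fuchsN ε k‖ := add_le_add hDnorm hNnorm
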